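/- Given n unit vectors u_1, ..., u_n in ℝ² and 2 ≤ k ≤ n, among the 2n vectors ±u_1, ..., ±u_n there exist k of them all lying in a closed circular arc of angular length at most (k−1)π/n. -/

import Mathlib

open Finset Complex

lemma decomp (x : ℂ) (hx : ‖x‖ = 1) :
    ∃ (e φ : ℝ), (e = 1 ∨ e = -1) ∧ 0 ≤ φ ∧ φ < Real.pi ∧ e • x = Complex.exp (φ * I) := by
  have hx' : Complex.exp (x.arg * I) = x := by
    have h := Complex.norm_mul_exp_arg_mul_I x
    rw [hx] at h; simpa using h
  rcases lt_or_ge x.arg 0 with h0 | h0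
  · refine ⟨-1, x.arg + Real.pi, Or.inr rfl, ?_, by linarith, ?_⟩
    · have := Complex.neg_pi_lt_arg x; linarith
    · push_cast
      rw [add_mul, Complex.exp_add, Complex.exp_pi_mul_I, hx']
      simp [mul_comm]
  rcases lt_or_ge x.arg Real.pi with h1 | h1
  · exact ⟨1, x.arg, Or.inl rfl, h0, h1, by rw [one_smul, hx']⟩
  · have harg : x.arg = Real.pi := le_antisymm (Complex.arg_le_pi x) h1
    refine ⟨-1, 0, Or.inr rfl, le_refl _, Real.pi_pos, ?_⟩
    rw [← hx', harg]
    simp [Complex.exp_pi_mul_I]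

theorem stmt_16 (n k : ℕ) (hk : 2 ≤ k) (hkn : k ≤ n)
    (u : Fin n → ℂ) (hu : ∀ i, ‖u i‖ = 1) :
    ∃ (s : Fin k → Fin n) (ε : Fin k → ℝ) (θ : ℝ),
      Function.Injective s ∧ (∀ i, ε i = 1 ∨ ε i = -1) ∧
      ∀ i, ∃ ψ ∈ Set.Icc θ (θ + ((k : ℝ) - 1) * Real.pi / n),
        ε i • u (s i) = Complex.exp (ψ * Complex.I) := by
  have hn : 0 < n := lt_of_lt_of_le (by omega) hkn
  choose e φ he hφ0 hφπ hspec using fun i => decomp (u i) (hu i)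
  set σ := Tuple.sort φ with hσ
  have hgmono : Monotone (φ ∘ σ) := Tuple.monotone_sort φ
  set c := k - 1 with hc
  set F : ℕ → ℝ := fun m => φ (σ ⟨m % n, Nat.mod_lt _ hn⟩) + Real.pi * (m / n : ℕ) with hF
  have hFper : ∀ m, F (m + n) = F m + Real.pi := by
    intro m
    simp only [hF]
    rw [show (⟨(m+n) % n, Nat.mod_lt _ hn⟩ : Fin n) = ⟨m % n, Nat.mod_lt _ hn⟩ from
      Fin.ext (Nat.add_mod_right m n), Nat.add_div_right _ hn]
    push_cast
    ring
  have hFmono : Monotone F := by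
    apply monotone_nat_of_le_succ
    intro m
    have hm : n * (m / n) + m % n = m := Nat.div_add_mod m n
    have hmod : m % n < n := Nat.mod_lt _ hn
    rcases lt_or_ge (m % n + 1) n with h | h
    · have hh : m + 1 = n * (m / n) + (m % n + 1) := by omega
      have h1 : (m + 1) % n = m % n + 1 := by
        rw [hh, Nat.mul_add_mod, Nat.mod_eq_of_lt h]
      have h2 : (m + 1) / n = m / n := by
        rw [hh, Nat.mul_add_div hn, Nat.div_eq_of_lt h, add_zero]
      simp only [hF]
      rw [show (⟨(m+1) % n, Nat.mod_lt _ hn⟩ : Fin n) = ⟨m % n + 1, h⟩ from Fin.ext h1, h2]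
      have := hgmono (show (⟨m % n, hmod⟩ : Fin n) ≤ ⟨m % n + 1, h⟩ from by
        simp [Fin.mk_le_mk])
      simp only [Function.comp_apply] at this
      have h3 : (⟨m % n, Nat.mod_lt _ hn⟩ : Fin n) = ⟨m % n, hmod⟩ := rfl
      rw [h3]
      linarith
    · have hr : m % n + 1 = n := by omega
      have hh : m + 1 = n * (m / n + 1) := by rw [Nat.mul_succ]; omega
      have h1 : (m + 1) % n = 0 := by rw [hh, Nat.mul_mod_right]
      have h2 : (m + 1) / n = m / n + 1 := by
        rw [hh, Nat.mul_div_cancel_left _ hn]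
      simp only [hF]
      rw [show (⟨(m+1) % n, Nat.mod_lt _ hn⟩ : Fin n) = ⟨0, hn⟩ from Fin.ext h1, h2]
      push_cast
      have ha := hφπ (σ ⟨m % n, hmod⟩)
      have hb := hφ0 (σ ⟨0, hn⟩)
      nlinarith [Real.pi_pos]
  have hcn : c ≤ n := by omega
  have hsum : ∑ j ∈ Finset.range n, (F (j + c) - F j) = c * Real.pi := by
    have h1 : ∑ j ∈ Finset.range n, F (j + c) = ∑ j ∈ Finset.Ico c (n + c), F j := by
      rw [Finset.sum_Ico_eq_sum_range]
      simp only [Nat.add_sub_cancel]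
      exact Finset.sum_congr rfl fun j _ => by rw [add_comm]
    have h2 : ∑ j ∈ Finset.range c, F (j + n) = ∑ j ∈ Finset.Ico n (n + c), F j := by
      rw [Finset.sum_Ico_eq_sum_range]
      simp only [Nat.add_sub_cancel_left]
      exact Finset.sum_congr rfl fun j _ => by rw [add_comm]
    have h3 : ∑ j ∈ Finset.Ico 0 c, F j + ∑ j ∈ Finset.Ico c (n + c), F j
        = ∑ j ∈ Finset.Ico 0 (n + c), F j :=
      Finset.sum_Ico_consecutive F (Nat.zero_le c) (Nat.le_add_left c n)
    have h4 : ∑ j ∈ Finset.Ico 0 n, F j + ∑ j ∈ Finset.Ico n (n + c), F j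
        = ∑ j ∈ Finset.Ico 0 (n + c), F j :=
      Finset.sum_Ico_consecutive F (Nat.zero_le n) (Nat.le_add_right n c)
    have h5 : ∑ j ∈ Finset.range c, (F (j + n) - F j) = c * Real.pi := by
      rw [Finset.sum_congr rfl fun j _ => by rw [hFper j]]
      simp [add_sub_cancel_left, mul_comm]
    rw [Finset.sum_sub_distrib] at h5 ⊢
    rw [h1, h2] at *
    simp only [← Finset.range_eq_Ico] at h3 h4
    linarith
  have hex : ∃ j ∈ Finset.range n, F (j + c) - F j ≤ c * Real.pi / n := by
    by_contra hcon
    push_neg at hcon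
    have hlt : ∑ _j ∈ Finset.range n, ((c : ℝ) * Real.pi / n)
        < ∑ j ∈ Finset.range n, (F (j + c) - F j) :=
      Finset.sum_lt_sum_of_nonempty ⟨0, Finset.mem_range.2 hn⟩ fun j hj => hcon j hj
    rw [Finset.sum_const, Finset.card_range, nsmul_eq_mul, hsum] at hlt
    have hne : (n : ℝ) ≠ 0 := Nat.cast_ne_zero.2 hn.ne'
    have : (n : ℝ) * ((c : ℝ) * Real.pi / n) = c * Real.pi := by field_simp
    linarith
  obtain ⟨j, hjmem, hjle⟩ := hex
  have hjn : j < n := Finset.mem_range.1 hjmem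
  set s : Fin k → Fin n := fun i => σ ⟨(j + (i : ℕ)) % n, Nat.mod_lt _ hn⟩ with hs
  set ε : Fin k → ℝ := fun i => if j + (i : ℕ) < n then e (s i) else -(e (s i)) with hε
  refine ⟨s, ε, F j, ?_, ?_, ?_⟩
  · intro i i' hii
    simp only [hs] at hii
    have hmod : (j + (i : ℕ)) % n = (j + (i' : ℕ)) % n := by
      have := σ.injective hii
      exact congrArg Fin.val this
    have hmm : (i : ℕ) % n = (i' : ℕ) % n := Nat.ModEq.add_left_cancel' j hmod
    rw [Nat.mod_eq_of_lt (lt_of_lt_of_le i.isLt hkn),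
      Nat.mod_eq_of_lt (lt_of_lt_of_le i'.isLt hkn)] at hmm
    exact Fin.ext hmm
  · intro i
    simp only [hε]
    split <;> rcases he (s i) with h | h <;> simp [h]
  · intro i
    have hik : (i : ℕ) ≤ c := by have := i.isLt; omega
    have hjik : j + (i : ℕ) < 2 * n := by have := lt_of_lt_of_le i.isLt hkn; omega
    refine ⟨F (j + (i : ℕ)), ⟨hFmono (Nat.le_add_right j i), ?_⟩, ?_⟩
    · have h1 : F (j + (i : ℕ)) ≤ F (j + c) := hFmono (by omega)
      have hck : ((c : ℕ) : ℝ) * Real.pi / n = ((k : ℝ) - 1) * Real.pi / n := by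
        rw [hc]; push_cast [Nat.cast_sub (by omega : 1 ≤ k)]; ring_nf
      clear_value c F
      linarith
    · rcases lt_or_ge (j + (i : ℕ)) n with hcase | hcase
      · have hd : (j + (i : ℕ)) / n = 0 := Nat.div_eq_of_lt hcase
        simp only [hF, hε, if_pos hcase, hd]
        push_cast
        rw [mul_zero, add_zero]
        exact hspec (s i)
      · have hd : (j + (i : ℕ)) / n = 1 := by
          rw [Nat.div_eq_sub_div hn hcase, Nat.div_eq_of_lt (by omega)]
        simp only [hF, hε, if_neg (not_lt.2 hcase), hd]
        push_cast
        rw [mul_one, add_mul, Complex.exp_add, Complex.exp_pi_mul_I, neg_smul, hspec (s i)]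
        ring
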